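/- Let 0 < p < ∞ and let v be an admissible weight function. If sup{ v(x)/v(y) : 0 ≤ x ≤ y } = ∞, then the semigroup 𝒯 = {T_t : t ≥ 0} of left translation operators on L^p_v(ℝ₊) has infinite topological entropy: there exists a compact set K ⊆ L^p_v(ℝ₊) with h(𝒯,K) = ∞. -/

import Mathlib

open MeasureTheory Filter Set
open scoped ENNReal

/-- The `L^p_v` norm of a function on `[0,∞)`:
`‖f‖ = (∫₀^∞ |f(x)|^p v(x) dx)^(1/p)`. -/
noncomputable def lpNorm (p : ℝ) (v : ℝ → ℝ) (f : ℝ → ℝ) : ℝ :=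
  (∫ x in Set.Ici (0:ℝ), |f x| ^ p * v x) ^ (1 / p)

/-- Membership in the weighted Lebesgue space `L^p_v(ℝ₊)`. -/
def MemLpW (p : ℝ) (v : ℝ → ℝ) (f : ℝ → ℝ) : Prop :=
  AEStronglyMeasurable f (volume.restrict (Set.Ici (0:ℝ))) ∧
    IntegrableOn (fun x => |f x| ^ p * v x) (Set.Ici (0:ℝ))

/-- The left translation operator `(T_t f)(x) = f (x + t)`. -/
def translateW (t : ℝ) (f : ℝ → ℝ) : ℝ → ℝ := fun x => f (x + t)

/-- `v` is an admissible weight function: strictly positive, locally integrable on `[0,∞)`,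
and there are `M ≥ 1`, `w ≥ 0` with `v x ≤ M * exp (w*t) * v (x+t)` for all `x, t ≥ 0`. -/
def AdmissibleWeight (v : ℝ → ℝ) : Prop :=
  (∀ x, 0 ≤ x → 0 < v x) ∧
  (∀ a, 0 ≤ a → IntegrableOn v (Set.Icc (0:ℝ) a)) ∧
  ∃ M, 1 ≤ M ∧ ∃ w, 0 ≤ w ∧ ∀ x, 0 ≤ x → ∀ t, 0 ≤ t →
    v x ≤ M * Real.exp (w * t) * v (x + t)

/-- The set `{ v x / v y : 0 ≤ x ≤ y }`. -/
def ratioSet (v : ℝ → ℝ) : Set ℝ := {r | ∃ x y, 0 ≤ x ∧ x ≤ y ∧ r = v x / v y}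

/-- `S` is a `(t,ε)`-separated set for the family `{T_u : u ≥ 0}` with respect to the
distance `d`: distinct points of `S` are `ε`-apart at some time `u ∈ [0,t]`. -/
def IsSepSet {X : Type*} (d : X → X → ℝ) (T : ℝ → X → X) (t ε : ℝ) (S : Set X) : Prop :=
  ∀ f ∈ S, ∀ g ∈ S, f ≠ g → ∃ u ∈ Set.Icc (0:ℝ) t, ε ≤ d (T u f) (T u g)

/-- The largest cardinality `s_{t,ε}(𝒯,K)` of a `(t,ε)`-separated subset of `K`
(as an extended natural number, viewed in `ℝ≥0∞`). -/
noncomputable def maxSep {X : Type*} (d : X → X → ℝ) (T : ℝ → X → X) (K : Set X)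
    (t ε : ℝ) : ℝ≥0∞ :=
  ⨆ (S : Finset X) (_ : ↑S ⊆ K ∧ IsSepSet d T t ε ↑S), (S.card : ℝ≥0∞)

open Classical in
/-- Extended-real logarithm of an extended nonnegative real. -/
noncomputable def elog (x : ℝ≥0∞) : EReal :=
  if x = ⊤ then ⊤ else ((Real.log x.toReal : ℝ) : EReal)

/-- The topological entropy `h(𝒯,K)` of the family `{T_u : u ≥ 0}` on the set `K`,
with respect to the distance `d`; since `ε ↦ limsup_t (1/t) log s_{t,ε}` is antitone,
the limit as `ε → 0⁺` is the supremum over `ε > 0`. -/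
noncomputable def entropyOn {X : Type*} (d : X → X → ℝ) (T : ℝ → X → X) (K : Set X) : EReal :=
  ⨆ (ε : ℝ) (_ : 0 < ε),
    Filter.limsup (fun t : ℝ => ((t⁻¹ : ℝ) : EReal) * elog (maxSep d T K t ε)) Filter.atTop

/-- Sequential compactness of a set with respect to a (pseudo)distance `d`; for metric
spaces this is equivalent to compactness. -/
def DSeqCompact {X : Type*} (d : X → X → ℝ) (K : Set X) : Prop :=
  ∀ u : ℕ → X, (∀ n, u n ∈ K) → ∃ g ∈ K, ∃ φ : ℕ → ℕ, StrictMono φ ∧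
    Filter.Tendsto (fun n => d (u (φ n)) g) Filter.atTop (nhds 0)

/-- The topological entropy `h(𝒯) = sup { h(𝒯,K) : K ⊆ A compact }` of the family
`{T_u : u ≥ 0}` on the space `A`, with respect to the distance `d`. -/
noncomputable def entropyFam {X : Type*} (d : X → X → ℝ) (T : ℝ → X → X) (A : Set X) : EReal :=
  ⨆ (K : Set X) (_ : K ⊆ A ∧ DSeqCompact d K), entropyOn d T K


open Finset
set_option maxRecDepth 4000

/-- Hamming distance on `Fin m → Bool`. -/
def dHam {m : ℕ} (σ τ : Fin m → Bool) : ℕ :=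
  (Finset.univ.filter (fun j => σ j ≠ τ j)).card

lemma dHam_comm {m : ℕ} (σ τ : Fin m → Bool) : dHam σ τ = dHam τ σ := by
  unfold dHam; congr 1; apply Finset.filter_congr; intro j _; simp [ne_comm]

lemma dHam_self {m : ℕ} (σ : Fin m → Bool) : dHam σ σ = 0 := by
  simp [dHam]

/-- Ball counting: the number of `τ` within Hamming distance `k` of `σ` is at most
`∑_{i ≤ k} C(m,i)`. -/
lemma ball_card_le {m k : ℕ} (σ : Fin m → Bool) :
    (Finset.univ.filter (fun τ => dHam σ τ ≤ k)).card
      ≤ ∑ i ∈ Finset.range (k+1), m.choose i := by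
  classical
  set Φ : (Fin m → Bool) → Finset (Fin m) := fun τ => Finset.univ.filter (fun j => σ j ≠ τ j)
  have hinj : Set.InjOn Φ ↑(Finset.univ.filter (fun τ => dHam σ τ ≤ k)) := by
    intro τ₁ _ τ₂ _ h
    funext j
    by_cases h1 : σ j ≠ τ₁ j
    · have h2 : j ∈ Φ τ₂ := by rw [← h]; simpa [Φ] using h1
      simp only [Φ, Finset.mem_filter] at h2
      rcases eq_or_ne (τ₁ j) (τ₂ j) with he | hne
      · exact he
      · have h3 := h2.2
        revert h1 h3; cases σ j <;> cases τ₁ j <;> cases τ₂ j <;> simp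
    · push_neg at h1
      have h2 : j ∉ Φ τ₂ := by rw [← h]; simp [Φ, h1]
      simp only [Φ, Finset.mem_filter, Finset.mem_univ, true_and, not_not] at h2
      rw [← h1, h2]
  have himg : ∀ τ ∈ Finset.univ.filter (fun τ => dHam σ τ ≤ k),
      Φ τ ∈ (Finset.range (k+1)).biUnion (fun i => Finset.powersetCard i Finset.univ) := by
    intro τ hτ
    simp only [Finset.mem_filter] at hτ
    apply Finset.mem_biUnion.2
    refine ⟨(Φ τ).card, ?_, ?_⟩
    · simp only [Finset.mem_range]; exact Nat.lt_succ_of_le hτ.2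
    · simp [Finset.mem_powersetCard]
  calc (Finset.univ.filter (fun τ => dHam σ τ ≤ k)).card
      ≤ ((Finset.range (k+1)).biUnion (fun i => Finset.powersetCard i Finset.univ)).card :=
        Finset.card_le_card_of_injOn Φ himg hinj
    _ ≤ ∑ i ∈ Finset.range (k+1), (Finset.powersetCard i (Finset.univ : Finset (Fin m))).card :=
        Finset.card_biUnion_le
    _ = ∑ i ∈ Finset.range (k+1), m.choose i := by
        simp [Finset.card_powersetCard]

/-- binomial tail bound: `∑_{i ≤ k} C(m,i) ≤ 9^k (10/9)^m` (in ℝ). -/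
lemma tail_bound (m k : ℕ) (hk : k ≤ m) :
    (∑ i ∈ Finset.range (k+1), (m.choose i : ℝ)) ≤ 9^k * (10/9 : ℝ)^m := by
  have h1 : ((10:ℝ)/9)^m = ∑ i ∈ Finset.range (m+1), (m.choose i : ℝ) * (1/9 : ℝ)^i := by
    have h0 := add_pow (1/9 : ℝ) (1 : ℝ) m
    have h2 : (1 : ℝ)/9 + 1 = 10/9 := by norm_num
    rw [← h2, h0]
    apply Finset.sum_congr rfl
    intro i hi
    ring
  rw [h1, Finset.mul_sum]
  calc (∑ i ∈ Finset.range (k+1), (m.choose i : ℝ))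
      ≤ ∑ i ∈ Finset.range (k+1), (9:ℝ)^k * ((m.choose i : ℝ) * (1/9)^i) := by
        apply Finset.sum_le_sum
        intro i hi
        have hik : i ≤ k := Nat.lt_succ_iff.mp (Finset.mem_range.mp hi)
        have h3 : (9:ℝ)^k * (1/9)^i = 9^(k-i) := by
          rw [one_div, inv_pow, eq_comm, ← Nat.sub_add_cancel hik, pow_add,
            Nat.sub_add_cancel hik]
          field_simp
        rw [show (9:ℝ)^k * ((m.choose i : ℝ) * (1/9)^i) = (m.choose i : ℝ) * ((9:ℝ)^k * (1/9)^i) by ring, h3]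
        nth_rewrite 1 [← mul_one (m.choose i : ℝ)]
        apply mul_le_mul_of_nonneg_left _ (Nat.cast_nonneg _)
        exact one_le_pow₀ (by norm_num)
    _ ≤ ∑ i ∈ Finset.range (m+1), (9:ℝ)^k * ((m.choose i : ℝ) * (1/9)^i) := by
        apply Finset.sum_le_sum_of_subset_of_nonneg
        · apply Finset.range_subset_range.2; omega
        · intro i _ _; positivity

/-- Gilbert–Varshamov-style: arbitrarily large codes with (relative) distance ≥ 1/100. -/
lemma exists_code (N : ℕ) :
    ∃ (m : ℕ) (C : Finset (Fin m → Bool)), 0 < m ∧ 2^N ≤ C.card ∧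
      ∀ σ ∈ C, ∀ τ ∈ C, σ ≠ τ → m ≤ 100 * dHam σ τ := by
  classical
  set m : ℕ := 400 * (N+1) with hm
  set k : ℕ := 4 * (N+1) with hk
  refine ⟨m, ?_⟩
  set P : Finset (Fin m → Bool) → Prop :=
    fun C => ∀ σ ∈ C, ∀ τ ∈ C, σ ≠ τ → k + 1 ≤ dHam σ τ with hP
  have hfam : (Finset.univ.powerset.filter P).Nonempty := by
    refine ⟨∅, ?_⟩
    simp [P]
  obtain ⟨C, hCmem, hCmax⟩ := Finset.exists_max_image (Finset.univ.powerset.filter P)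
    (fun C => C.card) hfam
  simp only [Finset.mem_filter, Finset.mem_powerset] at hCmem
  have hCP : P C := hCmem.2
  -- maximality: every τ is within distance k of some codeword
  have hcov : ∀ τ : Fin m → Bool, ∃ σ ∈ C, dHam σ τ ≤ k := by
    intro τ
    by_contra hcon
    push_neg at hcon
    have hτC : τ ∉ C := by
      intro hτ
      have := hcon τ hτ
      simp [dHam_self] at this
    have hP' : P (insert τ C) := by
      intro σ₁ h₁ σ₂ h₂ hne
      rcases Finset.mem_insert.mp h₁ with e₁ | h₁'
      · rcases Finset.mem_insert.mp h₂ with e₂ | h₂'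
        · exact absurd (e₁.trans e₂.symm) hne
        · subst e₁; rw [dHam_comm]; have := hcon σ₂ h₂'; omega
      · rcases Finset.mem_insert.mp h₂ with e₂ | h₂'
        · subst e₂; have := hcon σ₁ h₁'; omega
        · exact hCP σ₁ h₁' σ₂ h₂' hne
    have hmem' : insert τ C ∈ Finset.univ.powerset.filter P := by
      simp only [Finset.mem_filter, Finset.mem_powerset]
      exact ⟨Finset.subset_univ _, hP'⟩
    have := hCmax _ hmem'
    rw [Finset.card_insert_of_notMem hτC] at this
    omega
  -- counting
  have hcount : (2:ℕ)^m ≤ C.card * ∑ i ∈ Finset.range (k+1), m.choose i := by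
    have hsub : (Finset.univ : Finset (Fin m → Bool)) ⊆
        C.biUnion (fun σ => Finset.univ.filter (fun τ => dHam σ τ ≤ k)) := by
      intro τ _
      obtain ⟨σ, hσ, hd⟩ := hcov τ
      exact Finset.mem_biUnion.2 ⟨σ, hσ, by simp [hd]⟩
    calc (2:ℕ)^m = (Finset.univ : Finset (Fin m → Bool)).card := by
          rw [Finset.card_univ, Fintype.card_fun]; simp
      _ ≤ (C.biUnion (fun σ => Finset.univ.filter (fun τ => dHam σ τ ≤ k))).card :=
          Finset.card_le_card hsub
      _ ≤ ∑ σ ∈ C, (Finset.univ.filter (fun τ => dHam σ τ ≤ k)).card :=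
          Finset.card_biUnion_le
      _ ≤ ∑ _σ ∈ C, ∑ i ∈ Finset.range (k+1), m.choose i :=
          Finset.sum_le_sum (fun σ _ => ball_card_le σ)
      _ = C.card * ∑ i ∈ Finset.range (k+1), m.choose i := by
          rw [Finset.sum_const, smul_eq_mul]
  -- numerics in ℝ
  have hkm : k ≤ m := by omega
  have htail := tail_bound m k hkm
  have hQpos : (0:ℝ) < ∑ i ∈ Finset.range (k+1), (m.choose i : ℝ) := by
    apply Finset.sum_pos'
    · intro i _; positivity
    · exact ⟨0, by simp, by simp⟩
  have hnum : (2:ℝ)^N * (9^k * (10/9:ℝ)^m) ≤ 2^m := by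
    have h109 : ((10:ℝ)/9)^m ≤ 2^(200*(N+1)) := by
      have e1 : ((10:ℝ)/9)^m = (((10:ℝ)/9)^2)^(200*(N+1)) := by
        rw [← pow_mul]; congr 1; omega
      rw [e1]
      calc ((((10:ℝ)/9)^2))^(200*(N+1)) ≤ (2:ℝ)^(200*(N+1)) :=
        pow_le_pow_left₀ (by positivity) (by norm_num) _
      _ = _ := rfl
    have h9 : (9:ℝ)^k ≤ 2^(16*(N+1)) := by
      calc (9:ℝ)^k ≤ 16^k := pow_le_pow_left₀ (by norm_num) (by norm_num) k
        _ = (2^4:ℝ)^k := by norm_num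
        _ = 2^(4*k) := by rw [← pow_mul]
        _ = 2^(16*(N+1)) := by congr 1; omega
    calc (2:ℝ)^N * (9^k * (10/9:ℝ)^m)
        ≤ (2:ℝ)^N * (2^(16*(N+1)) * 2^(200*(N+1))) := by
          apply mul_le_mul_of_nonneg_left _ (by positivity)
          apply mul_le_mul h9 h109 (by positivity) (by positivity)
      _ = (2:ℝ)^(N + (16*(N+1) + 200*(N+1))) := by rw [← pow_add, ← pow_add]
      _ ≤ (2:ℝ)^m := by
          apply pow_le_pow_right₀ (by norm_num)
          omega
  have hcard : (2:ℝ)^N ≤ (C.card : ℝ) := by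
    have hcountR : (2:ℝ)^m ≤ (C.card : ℝ) * ∑ i ∈ Finset.range (k+1), (m.choose i : ℝ) := by
      have h2 : ((2^m : ℕ) : ℝ) ≤ ((C.card * ∑ i ∈ Finset.range (k+1), m.choose i : ℕ) : ℝ) :=
        Nat.cast_le.2 hcount
      push_cast at h2
      exact h2
    nlinarith [hQpos, pow_pos (show (0:ℝ) < 2 by norm_num) N, pow_pos (show (0:ℝ) < 9 by norm_num) k, pow_pos (show (0:ℝ) < 10/9 by norm_num) m]
  refine ⟨C, by omega, ?_, ?_⟩
  · have h5 : ((2^N : ℕ) : ℝ) ≤ (C.card : ℝ) := by push_cast; exact hcard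
    exact_mod_cast h5
  · intro σ hσ τ hτ hne
    have := hCP σ hσ τ hτ hne
    omega
section StageConstruction

variable {p : ℝ} {v : ℝ → ℝ}

/-- Uniqueness of the subinterval containing a point. -/
lemma unique_subint {a : ℝ} {m : ℕ} (hm : 0 < m) {j j' : Fin m} {z : ℝ}
    (h1 : z ∈ Set.Ico (a + (j.val:ℝ)/(m:ℝ)) (a + ((j.val:ℝ)+1)/(m:ℝ)))
    (h2 : z ∈ Set.Ico (a + (j'.val:ℝ)/(m:ℝ)) (a + ((j'.val:ℝ)+1)/(m:ℝ))) : j = j' := by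
  have hmR : (0:ℝ) < m := by exact_mod_cast hm
  simp only [Set.mem_Ico] at h1 h2
  have e1 : (j.val:ℝ)/(m:ℝ) < ((j'.val:ℝ)+1)/(m:ℝ) := by linarith [h1.1, h2.2]
  have e2 : (j'.val:ℝ)/(m:ℝ) < ((j.val:ℝ)+1)/(m:ℝ) := by linarith [h2.1, h1.2]
  have n1 : (j.val:ℝ) < (j'.val:ℝ)+1 := by
    have := (div_lt_div_iff_of_pos_right hmR).mp e1; linarith
  have n2 : (j'.val:ℝ) < (j.val:ℝ)+1 := by
    have := (div_lt_div_iff_of_pos_right hmR).mp e2; linarith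
  have n1' : j.val < j'.val + 1 := by exact_mod_cast n1
  have n2' : j'.val < j.val + 1 := by exact_mod_cast n2
  exact Fin.ext (by omega)

lemma lpNorm_nonneg (hp : 0 < p) (hpos : ∀ x, 0 ≤ x → 0 < v x) (f : ℝ → ℝ) :
    0 ≤ lpNorm p v f := by
  apply Real.rpow_nonneg
  apply MeasureTheory.setIntegral_nonneg measurableSet_Ici
  intro x hx
  exact mul_nonneg (Real.rpow_nonneg (abs_nonneg _) p) (hpos x hx).le

lemma lpNorm_zero_fun (hp : 0 < p) : lpNorm p v 0 = 0 := by
  unfold _root_.lpNorm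
  have : ∀ x : ℝ, |(0:ℝ→ℝ) x| ^ p * v x = 0 := by
    intro x
    simp [Real.zero_rpow (ne_of_gt hp)]
  rw [MeasureTheory.integral_congr_ae (Filter.Eventually.of_forall this),
    MeasureTheory.integral_zero, Real.zero_rpow (by positivity : (1:ℝ)/p ≠ 0)]

set_option maxHeartbeats 1000000 in
/-- The main construction: for every `n ≥ 1` there is a time `t ≥ n` and a
`(t,1)`-separated finite family of at least `2^⌈2nt⌉` functions, each of norm ≤ 1/n. -/
lemma stage (hp : 0 < p)
    (hpos : ∀ x, 0 ≤ x → 0 < v x)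
    (hloc : ∀ a, 0 ≤ a → MeasureTheory.IntegrableOn v (Set.Icc (0:ℝ) a))
    (M : ℝ) (hM : 1 ≤ M) (W : ℝ) (hW : 1 ≤ W)
    (hbd : ∀ x, 0 ≤ x → ∀ u, 0 ≤ u → v x ≤ M * Real.exp (W*u) * v (x+u))
    (hsup : ∀ B : ℝ, ∃ r ∈ ratioSet v, B < r)
    (n : ℕ) (hn : 1 ≤ n) :
    ∃ (t : ℝ) (S : Finset (ℝ → ℝ)), (n:ℝ) ≤ t ∧
      (∀ f ∈ S, MemLpW p v f) ∧ (∀ f ∈ S, lpNorm p v f ≤ 1/n) ∧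
      IsSepSet (fun f g => lpNorm p v (f - g)) translateW t 1 ↑S ∧
      2^(⌈2*(n:ℝ)*t⌉₊) ≤ S.card := by
  classical
  have hp' : p ≠ 0 := ne_of_gt hp
  set C := M * Real.exp W with hCdef
  have hC1 : 1 ≤ C := by
    have := Real.one_le_exp (by linarith : (0:ℝ) ≤ W)
    nlinarith
  have hCpos : 0 < C := lt_of_lt_of_le one_pos hC1
  have hnR : (1:ℝ) ≤ (n:ℝ) := by exact_mod_cast hn
  -- pick a pair with huge ratio
  set B := M * Real.exp (W*((n:ℝ)+2)) * (1 + 100 * C^2 * (n:ℝ)^p) with hBdef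
  obtain ⟨r, hrmem, hBr⟩ := hsup B
  obtain ⟨x, y, hx0, hxy, rfl⟩ := hrmem
  have hy0 : (0:ℝ) ≤ y := le_trans hx0 hxy
  have hvx : 0 < v x := hpos x hx0
  have hvy : 0 < v y := hpos y hy0
  have hBfac1 : 1 ≤ M * Real.exp (W*((n:ℝ)+2)) := by
    have := Real.one_le_exp (by positivity : (0:ℝ) ≤ W*((n:ℝ)+2))
    nlinarith
  have hBfac2 : 0 ≤ 100 * C^2 * (n:ℝ)^p := by positivity
  -- ratio exceeds both pieces
  have hRgap : M * Real.exp (W*((n:ℝ)+2)) < v x / v y := by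
    have : M * Real.exp (W*((n:ℝ)+2)) ≤ B := by
      nth_rewrite 1 [← mul_one (M * Real.exp (W*((n:ℝ)+2)))]
      apply mul_le_mul_of_nonneg_left _ (by linarith)
      linarith
    linarith
  have hRnorm : 100 * C^2 * (n:ℝ)^p < v x / v y := by
    have : 100 * C^2 * (n:ℝ)^p ≤ B := by
      nth_rewrite 1 [← one_mul (100 * C^2 * (n:ℝ)^p)]
      rw [hBdef]
      apply mul_le_mul hBfac1 (by linarith) (by positivity) (by linarith)
    linarith
  -- gap bound : y - x > n + 2
  have hgap : (n:ℝ) + 2 < y - x := by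
    have h1 : v x ≤ M * Real.exp (W*(y-x)) * v y := by
      have := hbd x hx0 (y - x) (by linarith)
      rwa [add_sub_cancel] at this
    have h2 : v x / v y ≤ M * Real.exp (W*(y-x)) := by
      rw [div_le_iff₀ hvy]; exact h1
    have h3 : M * Real.exp (W*((n:ℝ)+2)) < M * Real.exp (W*(y-x)) := by linarith
    have h4 : Real.exp (W*((n:ℝ)+2)) < Real.exp (W*(y-x)) := by
      have hM0 : 0 < M := by linarith
      exact lt_of_mul_lt_mul_left h3 hM0.le
    have h5 : W*((n:ℝ)+2) < W*(y-x) := by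
      have := Real.exp_lt_exp.mp h4; exact this
    have hW0 : (0:ℝ) < W := by linarith
    exact lt_of_mul_lt_mul_left h5 hW0.le
  set t := y - x - 1 with htdef
  have htn : (n:ℝ) ≤ t := by simp only [htdef]; linarith
  have ht1 : (1:ℝ) ≤ t := le_trans hnR htn
  have ht0 : (0:ℝ) < t := lt_of_lt_of_le one_pos ht1
  have hyx : y - 1 = x + t := by simp only [htdef]; ring
  have hy1 : (0:ℝ) ≤ y - 1 := by linarith
  have hx1y : x + 1 ≤ y := by linarith
  -- code
  set N := ⌈2*(n:ℝ)*t⌉₊ with hNdef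
  obtain ⟨m, 𝒞, hm, hcard, hdist⟩ := exists_code N
  have hmR : (0:ℝ) < m := by exact_mod_cast hm
  -- heights
  set A := 100 * C / v x with hAdef
  have hApos : 0 < A := by positivity
  set hh := A^(1/p) / 2 with hhdef
  have hhpos : 0 < hh := by
    have := Real.rpow_pos_of_pos hApos (1/p)
    positivity
  have hApow : (2*hh)^p = A := by
    have h2hh : 2*hh = A^(1/p) := by rw [hhdef]; ring
    rw [h2hh, ← Real.rpow_mul hApos.le]
    rw [one_div, inv_mul_cancel₀ hp', Real.rpow_one]
  -- intervals
  set I : Fin m → Set ℝ := fun j => Set.Ico (y - 1 + (j.val:ℝ)/(m:ℝ)) (y - 1 + ((j.val:ℝ)+1)/(m:ℝ)) with hIdef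
  set I' : Fin m → Set ℝ := fun j => Set.Ico (x + (j.val:ℝ)/(m:ℝ)) (x + ((j.val:ℝ)+1)/(m:ℝ)) with hI'def
  have hIsub : ∀ j, I j ⊆ Set.Ico (y-1) y := by
    intro j z hz
    simp only [hIdef, Set.mem_Ico] at hz ⊢
    constructor
    · have : (0:ℝ) ≤ (j.val:ℝ)/(m:ℝ) := by positivity
      linarith [hz.1]
    · have hjm : ((j.val:ℝ)+1)/(m:ℝ) ≤ 1 := by
        rw [div_le_one hmR]
        have := j.isLt
        exact_mod_cast Nat.succ_le_of_lt this
      linarith [hz.2]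
  have hI'sub : ∀ j, I' j ⊆ Set.Ico x (x+1) := by
    intro j z hz
    simp only [hI'def, Set.mem_Ico] at hz ⊢
    constructor
    · have : (0:ℝ) ≤ (j.val:ℝ)/(m:ℝ) := by positivity
      linarith [hz.1]
    · have hjm : ((j.val:ℝ)+1)/(m:ℝ) ≤ 1 := by
        rw [div_le_one hmR]
        have := j.isLt
        exact_mod_cast Nat.succ_le_of_lt this
      linarith [hz.2]
  have hItrans : ∀ (s : ℝ) (j : Fin m), s + t ∈ I j ↔ s ∈ I' j := by
    intro s j
    simp only [hIdef, hI'def, Set.mem_Ico]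
    constructor
    · rintro ⟨h1, h2⟩; constructor <;> linarith
    · rintro ⟨h1, h2⟩; constructor <;> linarith
  have hImeas : ∀ j, MeasurableSet (I j) := fun j => measurableSet_Ico
  have hI'meas : ∀ j, MeasurableSet (I' j) := fun j => measurableSet_Ico
  have hIvol : ∀ j, MeasureTheory.volume (I' j) = ENNReal.ofReal (1/m) := by
    intro j
    rw [hI'def]
    simp only [Real.volume_Ico]
    congr 1
    field_simp; ring
  -- the functions
  set cc : (Fin m → Bool) → Fin m → ℝ := fun σ j => if σ j then hh else -hh with hccdef
  set fF : (Fin m → Bool) → ℝ → ℝ := fun σ z => ∑ j, Set.indicator (I j) (fun _ => cc σ j) z with hfFdef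
  have habs_cc : ∀ σ j, |cc σ j| = hh := by
    intro σ j
    rw [hccdef]
    rcases Bool.dichotomy (σ j) with h | h <;> simp [h, abs_of_pos hhpos, abs_of_neg (neg_neg_iff_pos.mpr hhpos)]
  have hval_mem : ∀ σ z (j : Fin m), z ∈ I j → fF σ z = cc σ j := by
    intro σ z j hz
    simp only [hfFdef]
    rw [Finset.sum_eq_single j]
    · exact Set.indicator_of_mem hz _
    · intro b _ hbj
      apply Set.indicator_of_notMem
      intro hzb
      exact hbj (unique_subint hm hzb hz)
    · intro hj; exact absurd (Finset.mem_univ j) hj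
  have hval_not : ∀ σ z, (∀ j, z ∉ I j) → fF σ z = 0 := by
    intro σ z hz
    simp only [hfFdef]
    apply Finset.sum_eq_zero
    intro j _
    exact Set.indicator_of_notMem (hz j) _
  have hmeas_fF : ∀ σ, Measurable (fF σ) := by
    intro σ
    simp only [hfFdef]
    apply Finset.measurable_sum
    intro j _
    exact measurable_const.indicator (hImeas j)
  -- pointwise |fF σ|^p * v
  have habs_fF : ∀ σ (z : ℝ), |fF σ z| ^ p * v z
      = Set.indicator (⋃ j, I j) (fun s => (hh^p) * v s) z := by
    intro σ z
    by_cases hz : ∃ j, z ∈ I j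
    · obtain ⟨j, hj⟩ := hz
      rw [hval_mem σ z j hj, Set.indicator_of_mem (Set.mem_iUnion.2 ⟨j, hj⟩), habs_cc]
    · push_neg at hz
      rw [hval_not σ z hz, Set.indicator_of_notMem]
      · simp [Real.zero_rpow hp']
      · intro hmem
        obtain ⟨j, hj⟩ := Set.mem_iUnion.1 hmem
        exact hz j hj
  -- the union of all source intervals
  set U : Set ℝ := ⋃ j, I j with hUdef
  have hUmeas : MeasurableSet U := MeasurableSet.iUnion (fun j => hImeas j)
  have hUsub : U ⊆ Set.Ico (y-1) y := Set.iUnion_subset hIsub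
  have hUIci : U ⊆ Set.Ici (0:ℝ) := by
    intro z hz
    have := (hUsub hz).1
    simp only [Set.mem_Ici]; linarith
  have hIcoInt : MeasureTheory.IntegrableOn v (Set.Ico (y-1) y) := by
    apply (hloc y hy0).mono_set
    intro z hz
    exact ⟨by linarith [hz.1], hz.2.le⟩
  have hUInt : MeasureTheory.IntegrableOn v U := hIcoInt.mono_set hUsub
  have hnorm_int : ∀ σ, ∫ z in Set.Ici (0:ℝ), |fF σ z| ^ p * v z = ∫ z in U, hh^p * v z := by
    intro σ
    rw [MeasureTheory.integral_congr_ae (Filter.Eventually.of_forall (habs_fF σ)),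
      MeasureTheory.integral_indicator hUmeas,
      MeasureTheory.Measure.restrict_restrict hUmeas,
      Set.inter_eq_self_of_subset_left hUIci]
  have hInorm_le : ∀ σ, ∫ z in Set.Ici (0:ℝ), |fF σ z| ^ p * v z ≤ hh^p * (C * v y) := by
    intro σ
    rw [hnorm_int σ, MeasureTheory.integral_const_mul]
    apply mul_le_mul_of_nonneg_left _ (Real.rpow_nonneg hhpos.le p)
    calc ∫ z in U, v z ≤ ∫ z in Set.Ico (y-1) y, v z := by
          apply MeasureTheory.setIntegral_mono_set hIcoInt
          · exact MeasureTheory.ae_restrict_of_forall_mem measurableSet_Ico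
              (fun z hz => (hpos z (by linarith [hz.1])).le)
          · exact HasSubset.Subset.eventuallyLE hUsub
      _ ≤ ∫ z in Set.Ico (y-1) y, C * v y := by
          apply MeasureTheory.setIntegral_mono_on hIcoInt _ measurableSet_Ico
          · intro s hs
            have hs0 : (0:ℝ) ≤ s := by linarith [hs.1]
            have h2 := hbd s hs0 (y - s) (by linarith [hs.2])
            rw [add_sub_cancel] at h2
            have h3 : Real.exp (W*(y-s)) ≤ Real.exp W := by
              apply Real.exp_le_exp.2
              nlinarith [hs.1, hs.2]
            have hvs := hpos s hs0
            calc v s ≤ M * Real.exp (W*(y-s)) * v y := h2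
              _ ≤ M * Real.exp W * v y := by nlinarith [Real.exp_pos (W*(y-s))]
              _ = C * v y := by rw [hCdef]
          · apply (MeasureTheory.integrableOn_const_iff).2
            right
            rw [Real.volume_Ico]
            exact ENNReal.ofReal_lt_top
      _ = C * v y := by
          rw [MeasureTheory.setIntegral_const, measureReal_def, Real.volume_Ico]
          have he1 : y - (y-1) = 1 := by ring
          rw [he1]
          simp
  have hpow_le : hh^p ≤ A := by
    have h1 : hh ≤ A^(1/p) := by
      rw [hhdef]
      exact half_le_self (Real.rpow_pos_of_pos hApos _).le
    calc hh^p ≤ (A^(1/p))^p := Real.rpow_le_rpow hhpos.le h1 hp.le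
      _ = A := by
        rw [← Real.rpow_mul hApos.le, one_div, inv_mul_cancel₀ hp', Real.rpow_one]
  have hint_nonneg : ∀ σ, 0 ≤ ∫ z in Set.Ici (0:ℝ), |fF σ z| ^ p * v z := by
    intro σ
    apply MeasureTheory.setIntegral_nonneg measurableSet_Ici
    intro z hz
    exact mul_nonneg (Real.rpow_nonneg (abs_nonneg _) p) (hpos z hz).le
  have hnpos : (0:ℝ) < (n:ℝ) := by linarith
  have hnorm_le : ∀ σ, lpNorm p v (fF σ) ≤ 1/(n:ℝ) := by
    intro σ
    have hle : ∫ z in Set.Ici (0:ℝ), |fF σ z| ^ p * v z ≤ (1/(n:ℝ))^p := by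
      have h4 : hh^p * (C * v y) ≤ A * (C * v y) :=
        mul_le_mul_of_nonneg_right hpow_le (by positivity)
      have h5 : A * (C * v y) = 100 * C^2 * v y / v x := by
        rw [hAdef]; field_simp
      have h6 : 100 * C^2 * v y / v x ≤ (1/(n:ℝ))^p := by
        have h7 : (1/(n:ℝ))^p = 1/(n:ℝ)^p := by
          rw [Real.div_rpow zero_le_one (Nat.cast_nonneg n), Real.one_rpow]
        rw [h7, div_le_div_iff₀ hvx (Real.rpow_pos_of_pos hnpos p)]
        have h8 : 100 * C^2 * (n:ℝ)^p * v y < v x := by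
          have := (lt_div_iff₀ hvy).mp hRnorm
          linarith
        nlinarith
      calc ∫ z in Set.Ici (0:ℝ), |fF σ z| ^ p * v z ≤ hh^p * (C * v y) := hInorm_le σ
        _ ≤ A * (C * v y) := h4
        _ = 100 * C^2 * v y / v x := h5
        _ ≤ (1/(n:ℝ))^p := h6
    show (∫ z in Set.Ici (0:ℝ), |fF σ z| ^ p * v z)^(1/p) ≤ 1/(n:ℝ)
    calc (∫ z in Set.Ici (0:ℝ), |fF σ z| ^ p * v z)^(1/p)
        ≤ ((1/(n:ℝ))^p)^(1/p) := Real.rpow_le_rpow (hint_nonneg σ) hle (by positivity)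
      _ = 1/(n:ℝ) := by
          rw [← Real.rpow_mul (by positivity : (0:ℝ) ≤ 1/(n:ℝ)), mul_one_div,
            div_self hp', Real.rpow_one]
  -- membership in the weighted space
  have hmem : ∀ σ, MemLpW p v (fF σ) := by
    intro σ
    constructor
    · exact (hmeas_fF σ).aestronglyMeasurable
    · have he : (fun z => |fF σ z|^p * v z) = Set.indicator U (fun s => hh^p * v s) :=
        funext (habs_fF σ)
      rw [MeasureTheory.IntegrableOn, MeasureTheory.integrable_congr
        (Filter.Eventually.of_forall (fun z => (habs_fF σ z)))]
      exact (MeasureTheory.IntegrableOn.integrable_indicator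
        (hUInt.const_mul (hh^p)) hUmeas).integrableOn
  -- separation
  have hsep : ∀ σ ∈ 𝒞, ∀ τ ∈ 𝒞, σ ≠ τ →
      1 ≤ lpNorm p v (translateW t (fF σ) - translateW t (fF τ)) := by
    intro σ hσ τ hτ hst
    set D := Finset.univ.filter (fun j => σ j ≠ τ j) with hDdef
    have hDcard : m ≤ 100 * D.card := by
      have := hdist σ hσ τ hτ hst
      simpa [dHam, hDdef] using this
    set UD : Set ℝ := ⋃ j ∈ D, I' j with hUDdef
    have hUDmeas : MeasurableSet UD :=
      MeasurableSet.biUnion (D.countable_toSet) (fun j _ => hI'meas j)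
    have hUDsub : UD ⊆ Set.Ico x (x+1) := by
      apply Set.iUnion₂_subset; intro j _; exact hI'sub j
    have hUDIci : UD ⊆ Set.Ici (0:ℝ) := by
      intro z hz
      have := (hUDsub hz).1
      simp only [Set.mem_Ici]; linarith
    have hUDInt : MeasureTheory.IntegrableOn v UD := by
      apply (hloc y hy0).mono_set
      intro z hz
      have h1 := hUDsub hz
      exact ⟨by linarith [h1.1], by linarith [h1.2]⟩
    have hdiff : ∀ s : ℝ, |(translateW t (fF σ) - translateW t (fF τ)) s| ^ p * v s
        = Set.indicator UD (fun z => A * v z) s := by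
      intro s
      have happ : (translateW t (fF σ) - translateW t (fF τ)) s = fF σ (s+t) - fF τ (s+t) := rfl
      rw [happ]
      by_cases hz : ∃ j, s + t ∈ I j
      · obtain ⟨j, hj⟩ := hz
        rw [hval_mem σ _ j hj, hval_mem τ _ j hj]
        by_cases hstj : σ j = τ j
        · have hzero : cc σ j - cc τ j = 0 := by simp only [hccdef]; rw [hstj]; ring
          rw [hzero]
          have hsnot : s ∉ UD := by
            intro hmem
            simp only [hUDdef, Set.mem_iUnion] at hmem
            obtain ⟨j', hj', hmem'⟩ := hmem
            have h1 : s + t ∈ I j' := (hItrans s j').2 hmem'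
            have h2 : j' = j := unique_subint hm h1 hj
            subst h2
            simp only [hDdef, Finset.mem_filter] at hj'
            exact hj'.2 hstj
          rw [Set.indicator_of_notMem hsnot]
          simp [Real.zero_rpow hp']
        · have hcases : |cc σ j - cc τ j| = 2*hh := by
            simp only [hccdef]
            cases hσj : σ j <;> cases hτj : τ j
            · rw [hσj, hτj] at hstj; exact absurd rfl hstj
            · rw [show (if (false:Bool) = true then hh else -hh) = -hh from by norm_num,
                show (if (true:Bool) = true then hh else -hh) = hh from by norm_num]
              have he2 : -hh - hh = -(2*hh) := by ring
              rw [he2, abs_neg, abs_of_pos (by linarith)]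
            · rw [show (if (true:Bool) = true then hh else -hh) = hh from by norm_num,
                show (if (false:Bool) = true then hh else -hh) = -hh from by norm_num]
              have he2 : hh - -hh = 2*hh := by ring
              rw [he2, abs_of_pos (by linarith)]
            · rw [hσj, hτj] at hstj; exact absurd rfl hstj
          rw [hcases, hApow]
          have hjD : j ∈ D := by
            simp only [hDdef, Finset.mem_filter]
            exact ⟨Finset.mem_univ j, hstj⟩
          have hsUD : s ∈ UD := by
            simp only [hUDdef, Set.mem_iUnion]
            exact ⟨j, hjD, (hItrans s j).1 hj⟩
          rw [Set.indicator_of_mem hsUD]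
      · push_neg at hz
        rw [hval_not σ _ hz, hval_not τ _ hz]
        have hsnot : s ∉ UD := by
          intro hmem
          simp only [hUDdef, Set.mem_iUnion] at hmem
          obtain ⟨j', _, hmem'⟩ := hmem
          exact hz j' ((hItrans s j').2 hmem')
        rw [Set.indicator_of_notMem hsnot]
        simp [Real.zero_rpow hp']
    have hvolUD : (MeasureTheory.volume UD).toReal = D.card / m := by
      have hdisj : (↑D : Set (Fin m)).PairwiseDisjoint I' := by
        intro a _ b _ hab
        apply Set.disjoint_left.2
        intro z hza hzb
        exact hab (unique_subint hm hza hzb)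
      rw [hUDdef, MeasureTheory.measure_biUnion_finset hdisj (fun j _ => hI'meas j)]
      rw [Finset.sum_congr rfl (fun j _ => hIvol j), Finset.sum_const, nsmul_eq_mul]
      rw [ENNReal.toReal_mul, ENNReal.toReal_ofReal (by positivity : (0:ℝ) ≤ 1/(m:ℝ))]
      simp only [ENNReal.toReal_natCast]
      ring
    have hsep_int : (1:ℝ) ≤ ∫ s in Set.Ici (0:ℝ),
        |(translateW t (fF σ) - translateW t (fF τ)) s| ^ p * v s := by
      rw [MeasureTheory.integral_congr_ae (Filter.Eventually.of_forall hdiff),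
        MeasureTheory.integral_indicator hUDmeas,
        MeasureTheory.Measure.restrict_restrict hUDmeas,
        Set.inter_eq_self_of_subset_left hUDIci,
        MeasureTheory.integral_const_mul]
      have hlow : (v x / C) * (MeasureTheory.volume UD).toReal ≤ ∫ z in UD, v z := by
        rw [show (v x / C) * (MeasureTheory.volume UD).toReal = MeasureTheory.volume.real UD • (v x / C) by rw [smul_eq_mul, mul_comm]; rfl]
        apply MeasureTheory.setIntegral_ge_of_const_le hUDmeas
        · apply ne_of_lt
          apply lt_of_le_of_lt (MeasureTheory.measure_mono hUDsub)
          rw [Real.volume_Ico]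
          exact ENNReal.ofReal_lt_top
        · intro z hz
          have hz' := hUDsub hz
          have hz0 : (0:ℝ) ≤ z := by linarith [hz'.1]
          have h8 := hbd x hx0 (z - x) (by linarith [hz'.1])
          rw [add_sub_cancel] at h8
          have h9 : Real.exp (W*(z-x)) ≤ Real.exp W := by
            apply Real.exp_le_exp.2
            nlinarith [hz'.1, hz'.2]
          have hvz := hpos z hz0
          have h10 : v x ≤ C * v z := by
            calc v x ≤ M * Real.exp (W*(z-x)) * v z := h8
              _ ≤ M * Real.exp W * v z := by nlinarith [Real.exp_pos (W*(z-x))]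
              _ = C * v z := by rw [hCdef]
          rw [div_le_iff₀ hCpos]
          linarith
        · exact hUDInt
      have h11 : A * ((v x / C) * (MeasureTheory.volume UD).toReal) = 100 * ((D.card:ℝ)/m) := by
        rw [hvolUD, hAdef]
        field_simp
      have h12 : (1:ℝ) ≤ 100 * ((D.card:ℝ)/m) := by
        have hc : (m:ℝ) ≤ 100 * (D.card:ℝ) := by exact_mod_cast hDcard
        rw [← mul_div_assoc, le_div_iff₀ hmR, one_mul]
        exact hc
      calc (1:ℝ) ≤ 100 * ((D.card:ℝ)/m) := h12
        _ = A * ((v x / C) * (MeasureTheory.volume UD).toReal) := h11.symm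
        _ ≤ A * ∫ z in UD, v z := mul_le_mul_of_nonneg_left hlow hApos.le
    show (1:ℝ) ≤ (∫ s in Set.Ici (0:ℝ),
        |(translateW t (fF σ) - translateW t (fF τ)) s| ^ p * v s)^(1/p)
    calc (1:ℝ) = 1^(1/p) := (Real.one_rpow _).symm
      _ ≤ _ := Real.rpow_le_rpow zero_le_one hsep_int (by positivity)
  -- injectivity
  have hneq : ∀ σ τ : Fin m → Bool, σ ≠ τ → fF σ ≠ fF τ := by
    intro σ τ hst
    obtain ⟨j, hj⟩ : ∃ j, σ j ≠ τ j := by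
      by_contra hcon; push_neg at hcon; exact hst (funext hcon)
    have hz0mem : y - 1 + (j.val:ℝ)/(m:ℝ) ∈ I j := by
      simp only [hIdef, Set.mem_Ico]
      constructor
      · exact le_refl _
      · have : (j.val:ℝ)/(m:ℝ) < ((j.val:ℝ)+1)/(m:ℝ) := by
          apply div_lt_div_of_pos_right ?_ hmR
          linarith
        linarith
    intro heq
    have hval := congrFun heq (y - 1 + (j.val:ℝ)/(m:ℝ))
    rw [hval_mem σ _ j hz0mem, hval_mem τ _ j hz0mem] at hval
    simp only [hccdef] at hval
    cases hσj : σ j <;> cases hτj : τ j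
    · exact hj (hσj.trans hτj.symm)
    · rw [hσj, hτj] at hval; simp at hval; linarith
    · rw [hσj, hτj] at hval; simp at hval; linarith
    · exact hj (hσj.trans hτj.symm)
  -- assemble
  refine ⟨t, 𝒞.image fF, htn, ?_, ?_, ?_, ?_⟩
  · intro f hf
    obtain ⟨σ, _, rfl⟩ := Finset.mem_image.1 hf
    exact hmem σ
  · intro f hf
    obtain ⟨σ, _, rfl⟩ := Finset.mem_image.1 hf
    exact hnorm_le σ
  · intro f hf g hg hfg
    obtain ⟨σ, hσ, rfl⟩ := Finset.mem_image.1 (Finset.mem_coe.1 hf)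
    obtain ⟨τ, hτ, rfl⟩ := Finset.mem_image.1 (Finset.mem_coe.1 hg)
    have hst : σ ≠ τ := fun h => hfg (by rw [h])
    exact ⟨t, ⟨ht0.le, le_refl t⟩, hsep σ hσ τ hτ hst⟩
  · rw [Finset.card_image_of_injOn (fun σ _ τ _ h => by
      by_contra hne
      exact hneq σ τ hne h)]
    exact hcard

end StageConstruction

/-- An `EReal` above every real coercion is `⊤`. -/
lemma ereal_eq_top_of_forall_le {z : EReal} (h : ∀ c : ℝ, (c:EReal) ≤ z) : z = ⊤ := by
  by_contra hne
  induction z using EReal.rec with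
  | bot => have := h 0; simp at this
  | coe r => have := h (r+1); norm_cast at this; linarith
  | top => exact hne rfl

theorem lp_infinite_entropy_of_unbounded_ratio
    (p : ℝ) (hp : 0 < p) (v : ℝ → ℝ) (hv : AdmissibleWeight v)
    (hsup : ∀ B : ℝ, ∃ r ∈ ratioSet v, B < r) :
    ∃ K : Set (ℝ → ℝ), K ⊆ {f | MemLpW p v f} ∧
      DSeqCompact (fun f g => lpNorm p v (f - g)) K ∧
      entropyOn (fun f g => lpNorm p v (f - g)) translateW K = ⊤ := by
  classical
  obtain ⟨hpos, hloc, M, hM, w, hw0, hbd0⟩ := hv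
  set W := w + 1 with hWdef
  have hW : 1 ≤ W := by simp only [hWdef]; linarith
  have hbd : ∀ x, 0 ≤ x → ∀ u, 0 ≤ u → v x ≤ M * Real.exp (W*u) * v (x+u) := by
    intro x hx u hu
    have h1 := hbd0 x hx u hu
    have h2 : Real.exp (w*u) ≤ Real.exp (W*u) := by
      apply Real.exp_le_exp.2
      simp only [hWdef]
      nlinarith
    have hv2 : 0 < v (x+u) := hpos _ (by linarith)
    have h3 : M * Real.exp (w*u) ≤ M * Real.exp (W*u) :=
      mul_le_mul_of_nonneg_left h2 (by linarith)
    have h4 : M * Real.exp (w*u) * v (x+u) ≤ M * Real.exp (W*u) * v (x+u) :=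
      mul_le_mul_of_nonneg_right h3 hv2.le
    linarith
  -- the stages
  have hstage := fun n : ℕ =>
    stage hp hpos hloc M hM W hW hbd hsup (n+1) (Nat.le_add_left 1 n)
  choose T S hT hSmem hSnorm hSsep hScard using hstage
  set K : Set (ℝ → ℝ) := insert 0 (⋃ n, (S n : Set (ℝ→ℝ))) with hK
  have hzeromem : MemLpW p v 0 := by
    constructor
    · exact aestronglyMeasurable_const
    · have h0 : ∀ z:ℝ, |(0:ℝ→ℝ) z|^p * v z = 0 := fun z => by
        simp [Real.zero_rpow (ne_of_gt hp)]
      rw [MeasureTheory.IntegrableOn,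
        MeasureTheory.integrable_congr (Filter.Eventually.of_forall h0)]
      exact MeasureTheory.integrable_zero _ _ _
  refine ⟨K, ?_, ?_, ?_⟩
  · -- membership
    intro f hf
    rcases Set.mem_insert_iff.1 hf with rfl | hf'
    · exact hzeromem
    · obtain ⟨n, hn⟩ := Set.mem_iUnion.1 hf'
      exact hSmem n f (Finset.mem_coe.1 hn)
  · -- sequential compactness
    intro u hu
    by_cases hcase : ∃ f, ∃ᶠ i in Filter.atTop, u i = f
    · obtain ⟨f, hf⟩ := hcase
      obtain ⟨φ, hφmono, hφ⟩ := Filter.extraction_of_frequently_atTop hf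
      refine ⟨f, ?_, φ, hφmono, ?_⟩
      · have := hu (φ 0); rwa [hφ 0] at this
      · have hc : ∀ nn : ℕ, lpNorm p v (u (φ nn) - f) = 0 := by
          intro nn; rw [hφ nn, sub_self]; exact lpNorm_zero_fun hp
        have he : (fun nn => lpNorm p v (u (φ nn) - f)) = fun _ => (0:ℝ) := funext hc
        rw [he]
        exact tendsto_const_nhds
    · push_neg at hcase
      refine ⟨0, Set.mem_insert _ _, id, strictMono_id, ?_⟩
      have hbound : ∀ j : ℕ, ∀ᶠ i in Filter.atTop, lpNorm p v (u i - 0) ≤ 1/((j:ℝ)+1) := by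
        intro j
        set F : Finset (ℝ→ℝ) := (Finset.range (j+1)).biUnion S with hF
        have hev : ∀ᶠ i in Filter.atTop, ∀ f ∈ F, u i ≠ f := by
          rw [Filter.eventually_all_finset]
          intro f _
          have := hcase f
          exact this
        filter_upwards [hev] with i hi
        rcases Set.mem_insert_iff.1 (hu i) with h0 | hmem
        · rw [h0, sub_zero, lpNorm_zero_fun hp]
          positivity
        · obtain ⟨k, hk⟩ := Set.mem_iUnion.1 hmem
          have hkmem : u i ∈ S k := Finset.mem_coe.1 hk
          have hkj : j + 1 ≤ k := by
            by_contra hlt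
            push_neg at hlt
            exact hi (u i) (Finset.mem_biUnion.2 ⟨k, Finset.mem_range.2 hlt, hkmem⟩) rfl
          have hnorm := hSnorm k (u i) hkmem
          rw [sub_zero]
          calc lpNorm p v (u i) ≤ 1/((k+1:ℕ):ℝ) := hnorm
            _ ≤ 1/((j:ℝ)+1) := by
                apply one_div_le_one_div_of_le (by positivity)
                have hjk : (j:ℝ) ≤ (k:ℝ) := by exact_mod_cast Nat.le_of_succ_le hkj
                push_cast
                linarith
      rw [Metric.tendsto_atTop]
      intro ε hε
      obtain ⟨j, hj⟩ := exists_nat_one_div_lt hε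
      obtain ⟨Ni, hNi⟩ := Filter.eventually_atTop.1 (hbound j)
      refine ⟨Ni, fun i hi => ?_⟩
      have h1 := hNi i hi
      have h0 : 0 ≤ lpNorm p v (u (id i) - 0) := lpNorm_nonneg hp hpos _
      rw [Real.dist_eq, sub_zero, abs_of_nonneg h0]
      exact lt_of_le_of_lt h1 hj
  · -- infinite entropy
    have hlim : Filter.limsup (fun t : ℝ => ((t⁻¹ : ℝ) : EReal) *
        elog (maxSep (fun f g => lpNorm p v (f - g)) translateW K t 1)) Filter.atTop = ⊤ := by
      apply ereal_eq_top_of_forall_le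
      intro c
      apply Filter.le_limsup_of_frequently_le ?_ (by isBoundedDefault)
      rw [Filter.frequently_atTop]
      intro a
      set nn : ℕ := max ⌈c⌉₊ ⌈a⌉₊ with hnn
      have hTn := hT nn
      have hTpos : (0:ℝ) < T nn := by
        have : (1:ℝ) ≤ ((nn+1:ℕ):ℝ) := by exact_mod_cast Nat.le_add_left 1 nn
        linarith
      have haT : a ≤ T nn := by
        have h1 : a ≤ (⌈a⌉₊:ℝ) := Nat.le_ceil a
        have h2 : ((⌈a⌉₊:ℕ):ℝ) ≤ ((nn+1:ℕ):ℝ) := by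
          exact_mod_cast Nat.le_succ_of_le (le_max_right _ _)
        linarith
      refine ⟨T nn, haT, ?_⟩
      set msep := maxSep (fun f g => lpNorm p v (f - g)) translateW K (T nn) 1 with hmsep
      have hsub : ↑(S nn) ⊆ K := fun f hf =>
        Set.mem_insert_iff.2 (Or.inr (Set.mem_iUnion.2 ⟨nn, hf⟩))
      have hms : ((2:ℝ≥0∞))^(⌈2*(((nn+1:ℕ)):ℝ)*(T nn)⌉₊) ≤ msep := by
        have hle : (((S nn).card : ℕ) : ℝ≥0∞) ≤ msep :=
          le_iSup_of_le (S nn) (le_iSup_of_le ⟨hsub, hSsep nn⟩ le_rfl)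
        refine le_trans ?_ hle
        exact_mod_cast hScard nn
      have hcleN : c ≤ ((nn+1:ℕ):ℝ) := by
        have h1 : c ≤ (⌈c⌉₊:ℝ) := Nat.le_ceil c
        have h2 : ((⌈c⌉₊:ℕ):ℝ) ≤ ((nn+1:ℕ):ℝ) := by
          exact_mod_cast Nat.le_succ_of_le (le_max_left _ _)
        linarith
      rcases eq_or_ne msep ⊤ with htop | hne
      · rw [htop]
        have helogtop : elog ⊤ = ⊤ := by simp [elog]
        rw [helogtop, EReal.mul_top_of_pos]
        · exact le_top
        · exact_mod_cast inv_pos.2 hTpos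
      · have helog : elog msep = ((Real.log msep.toReal : ℝ) : EReal) := by
          simp [elog, hne]
        set N := ⌈2*(((nn+1:ℕ)):ℝ)*(T nn)⌉₊ with hN
        have htoReal : (2:ℝ)^N ≤ msep.toReal := by
          have := ENNReal.toReal_mono hne hms
          simpa using this
        have hlogmono : Real.log ((2:ℝ)^N) ≤ Real.log msep.toReal :=
          Real.log_le_log (by positivity) htoReal
        have hlogpow : Real.log ((2:ℝ)^N) = N * Real.log 2 := by rw [Real.log_pow]
        have hlog2 : (1:ℝ)/2 ≤ Real.log 2 := by
          have := Real.log_two_gt_d9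
          linarith
        have hNge : 2*(((nn+1:ℕ)):ℝ)*(T nn) ≤ (N:ℝ) := Nat.le_ceil _
        have hkey : ((nn+1:ℕ):ℝ)*(T nn) ≤ Real.log msep.toReal := by
          have h3 : (0:ℝ) ≤ (N:ℝ) := Nat.cast_nonneg N
          have h4 : (N:ℝ) * (1/2) ≤ (N:ℝ) * Real.log 2 :=
            mul_le_mul_of_nonneg_left hlog2 h3
          nlinarith
        rw [helog]
        have hfin : c ≤ (T nn)⁻¹ * Real.log msep.toReal := by
          have h5 : (T nn)⁻¹ * (((nn+1:ℕ):ℝ)*(T nn)) = ((nn+1:ℕ):ℝ) := by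
            field_simp
          have h6 : (T nn)⁻¹ * (((nn+1:ℕ):ℝ)*(T nn)) ≤ (T nn)⁻¹ * Real.log msep.toReal :=
            mul_le_mul_of_nonneg_left hkey (inv_nonneg.2 hTpos.le)
          rw [h5] at h6
          linarith
        calc (c:EReal) ≤ (((T nn)⁻¹ * Real.log msep.toReal : ℝ) : EReal) := by
              exact_mod_cast hfin
          _ = ((T nn)⁻¹ : ℝ) * ((Real.log msep.toReal : ℝ) : EReal) := by
              rw [EReal.coe_mul]
    apply le_antisymm le_top
    rw [entropyOn]
    apply le_iSup_of_le (1:ℝ)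
    apply le_iSup_of_le one_pos
    rw [hlim]
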